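/- Let $(x_n)$ be a weakly null sequence of nonzero indicator functions on a compact metric space $K$. Then the family $\mathcal{F} = \{F \subset \mathbb{N} : F = \{n : x_n(k) = 1\} \text{ for some } k \in K\}$ is adequate (closed under taking subsets) if and only if $(x_n)$ is a 1-suppression unconditional basic sequence in $C(K)$. -/

import Mathlib

open Filter Topology

/-- Key lemma: suppression-1 unconditionality yields, for disjoint finite sets
`G'` (on which some point takes value 1) and `T`, a point taking value 1 on `G'`
and 0 on `T`. -/
lemma stmt_9_key {K : Type*} [MetricSpace K] [CompactSpace K]
    (x : ℕ → C(K, ℝ))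
    (hind : ∀ n, ∀ k, x n k = 0 ∨ x n k = 1)
    (hsup : ∀ (a : ℕ → ℝ) (s G : Finset ℕ), G ⊆ s →
        ‖∑ n ∈ G, a n • x n‖ ≤ ‖∑ n ∈ s, a n • x n‖)
    (G' T : Finset ℕ) (hd : Disjoint G' T) (hne : G'.Nonempty)
    (hpt : ∃ k₀, ∀ n ∈ G', x n k₀ = 1) :
    ∃ k', (∀ n ∈ G', x n k' = 1) ∧ ∀ n ∈ T, x n k' = 0 := by
  obtain ⟨k₀, hk₀⟩ := hpt
  set ε : ℝ := 1 / (2 * (T.card + 1)) with hε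
  have hεpos : 0 < ε := by positivity
  have hεT : ε * T.card < 1 / 2 := by
    have h1 : ε * (T.card + 1) = 1 / 2 := by
      field_simp [hε]
      rw [hε]; field_simp
    nlinarith [hεpos]
  set a : ℕ → ℝ := fun n => if n ∈ G' then 1 else -ε with ha
  set m : ℝ := (G'.card : ℝ) with hm
  have hm1 : (1 : ℝ) ≤ m := by
    rw [hm]
    exact_mod_cast Finset.card_pos.mpr hne
  set g : C(K, ℝ) := ∑ n ∈ G' ∪ T, a n • x n with hg
  -- value at k₀ of the G'-sum is m
  have hval : (∑ n ∈ G', a n • x n) k₀ = m := by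
    calc (∑ n ∈ G', a n • x n) k₀ = ∑ n ∈ G', a n * x n k₀ := by
          simp only [ContinuousMap.coe_sum, Finset.sum_apply, ContinuousMap.smul_apply,
            smul_eq_mul]
      _ = ∑ _n ∈ G', (1 : ℝ) :=
          Finset.sum_congr rfl (fun n hn => by rw [ha]; simp [hn, hk₀ n hn])
      _ = m := by simp [hm]
  have hm2 : m ≤ ‖g‖ := by
    calc m = ‖(∑ n ∈ G', a n • x n) k₀‖ := by
            rw [hval, Real.norm_eq_abs, abs_of_nonneg (by positivity)]
      _ ≤ ‖∑ n ∈ G', a n • x n‖ := ContinuousMap.norm_coe_le_norm _ _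
      _ ≤ ‖g‖ := hsup a (G' ∪ T) G' Finset.subset_union_left
  -- norm of g is attained
  have hK : Nonempty K := ⟨k₀⟩
  obtain ⟨k', -, hk'⟩ := IsCompact.exists_isMaxOn isCompact_univ
    ⟨k₀, Set.mem_univ _⟩ ((continuous_abs.comp g.continuous).continuousOn
      : ContinuousOn (fun k => |g k|) Set.univ)
  have hgk' : m ≤ |g k'| := by
    refine le_trans hm2 ?_
    rw [show ‖g‖ = ‖g‖ from rfl]
    exact (ContinuousMap.norm_le g (abs_nonneg _)).mpr
      (fun k => by rw [Real.norm_eq_abs]; exact hk' (Set.mem_univ k))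
  -- compute g k'
  set A : ℝ := ∑ n ∈ G', x n k' with hA
  set B : ℝ := ∑ n ∈ T, x n k' with hB
  have hgval : g k' = A - ε * B := by
    rw [hg]
    simp only [ContinuousMap.coe_sum, Finset.sum_apply, ContinuousMap.smul_apply,
      smul_eq_mul]
    rw [Finset.sum_union hd]
    have h1 : ∑ n ∈ G', a n * x n k' = A := by
      refine Finset.sum_congr rfl (fun n hn => by rw [ha]; simp [hn])
    have h2 : ∑ n ∈ T, a n * x n k' = -(ε * B) := by
      rw [hB, Finset.mul_sum, ← Finset.sum_neg_distrib]
      refine Finset.sum_congr rfl (fun n hn => ?_)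
      have : n ∉ G' := Finset.disjoint_right.mp hd hn
      rw [ha]; simp [this]
    rw [h1, h2]; ring
  have hx01 : ∀ n, (0 : ℝ) ≤ x n k' ∧ x n k' ≤ 1 := by
    intro n
    rcases hind n k' with h | h <;> rw [h] <;> norm_num
  have hA0 : 0 ≤ A := Finset.sum_nonneg (fun n _ => (hx01 n).1)
  have hAle : A ≤ m := by
    calc A ≤ ∑ _n ∈ G', (1 : ℝ) := Finset.sum_le_sum (fun n _ => (hx01 n).2)
      _ = m := by simp [hm]
  have hB0 : 0 ≤ B := Finset.sum_nonneg (fun n _ => (hx01 n).1)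
  have hBle : B ≤ T.card := by
    calc B ≤ ∑ _n ∈ T, (1 : ℝ) := Finset.sum_le_sum (fun n _ => (hx01 n).2)
      _ = T.card := by simp
  -- deduce A = m and B = 0
  have hεB : 0 ≤ ε * B := by positivity
  have hεBlt : ε * B < 1 / 2 := lt_of_le_of_lt
    (mul_le_mul_of_nonneg_left hBle hεpos.le) hεT
  have hge : m ≤ A - ε * B := by
    rcases abs_cases (g k') with ⟨h, _⟩ | ⟨h, _⟩
    · rw [h, hgval] at hgk'; exact hgk'
    · exfalso; rw [h, hgval] at hgk'; linarith
  have hBzero : B = 0 := by nlinarith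
  have hAeq : A = m := by
    rw [hBzero] at hge; linarith
  refine ⟨k', ?_, ?_⟩
  · -- each term equals 1 on G'
    intro n₀ hn₀
    by_contra hcon
    have hx0 : x n₀ k' = 0 := (hind n₀ k').resolve_right hcon
    have : A ≤ m - 1 := by
      rw [hA, ← Finset.add_sum_erase _ _ hn₀, hx0, zero_add]
      calc ∑ n ∈ G'.erase n₀, x n k' ≤ ∑ _n ∈ G'.erase n₀, (1 : ℝ) :=
            Finset.sum_le_sum (fun n _ => (hx01 n).2)
        _ = ((G'.erase n₀).card : ℝ) := by simp
        _ = m - 1 := by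
            rw [Finset.card_erase_of_mem hn₀, hm]
            have := Finset.card_pos.mpr hne
            push_cast [Nat.cast_sub this]
            ring
    linarith
  · -- each term equals 0 on T
    intro n₀ hn₀
    have := (Finset.sum_eq_zero_iff_of_nonneg (fun n _ => (hx01 n).1)).mp hBzero
    exact this n₀ hn₀

/-- for a weakly null sequence of nonzero indicator functions on a
compact metric space `K`, the family `𝓕 = {{n | x n k = 1} : k ∈ K}` is
adequate (hereditary) iff `(x_n)` is a 1-suppression unconditional basic
sequence in `C(K)`. -/
theorem stmt_9 {K : Type*} [MetricSpace K] [CompactSpace K]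
    (x : ℕ → C(K, ℝ))
    (hind : ∀ n, (∀ k, x n k = 0 ∨ x n k = 1) ∧ x n ≠ 0)
    (hweak : ∀ φ : StrongDual ℝ C(K, ℝ),
      Tendsto (fun n => φ (x n)) atTop (𝓝 0)) :
    (∀ F ∈ {F : Set ℕ | ∃ k : K, F = {n | x n k = 1}},
        ∀ G ⊆ F, G ∈ {F : Set ℕ | ∃ k : K, F = {n | x n k = 1}}) ↔
    (∀ (a : ℕ → ℝ) (s G : Finset ℕ), G ⊆ s →
        ‖∑ n ∈ G, a n • x n‖ ≤ ‖∑ n ∈ s, a n • x n‖) := by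
  constructor
  · -- adequate → suppression-1
    intro hadq a s G hGs
    rw [ContinuousMap.norm_le _ (norm_nonneg _)]
    intro k
    obtain ⟨k', hk'⟩ := hadq {n | x n k = 1} ⟨k, rfl⟩ {n | x n k = 1 ∧ n ∈ G}
      (fun n hn => hn.1)
    have hiff : ∀ n, (x n k = 1 ∧ n ∈ G) ↔ x n k' = 1 := by
      intro n
      exact Set.ext_iff.mp hk' n
    have hterm : ∀ n, a n * x n k' = if n ∈ G then a n * x n k else 0 := by
      intro n
      rcases (hind n).1 k' with h' | h'
      · rw [h', mul_zero]
        by_cases hn : n ∈ G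
        · rw [if_pos hn]
          rcases (hind n).1 k with h | h
          · rw [h, mul_zero]
          · exfalso; rw [(hiff n).mp ⟨h, hn⟩] at h'; norm_num at h'
        · rw [if_neg hn]
      · rw [h']
        obtain ⟨h1, h2⟩ := (hiff n).mpr h'
        rw [if_pos h2, h1]
    have hval : (∑ n ∈ G, a n • x n) k = (∑ n ∈ s, a n • x n) k' := by
      simp only [ContinuousMap.coe_sum, Finset.sum_apply, ContinuousMap.smul_apply,
        smul_eq_mul]
      rw [Finset.sum_congr rfl (fun n _ => hterm n), Finset.sum_ite_mem,
        Finset.inter_eq_right.mpr hGs]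
    rw [hval]
    exact ContinuousMap.norm_coe_le_norm _ _
  · -- suppression-1 → adequate
    intro hsup F hF G hGF
    obtain ⟨k, rfl⟩ := hF
    have hind' : ∀ n, ∀ k, x n k = 0 ∨ x n k = 1 := fun n => (hind n).1
    -- G is finite
    have htend : Tendsto (fun n => x n k) atTop (𝓝 0) := by
      have := hweak (ContinuousMap.evalCLM ℝ k)
      exact this
    obtain ⟨N₀, hN₀⟩ : ∃ N₀, ∀ n ≥ N₀, x n k ≠ 1 := by
      have := (htend.eventually (Metric.ball_mem_nhds (0 : ℝ) (by norm_num : (0:ℝ) < 1/2))).exists_forall_of_atTop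
      obtain ⟨N₀, hN₀⟩ := (Metric.tendsto_atTop.mp htend) (1/2) (by norm_num)
      exact ⟨N₀, fun n hn h1 => by
        have := hN₀ n hn
        rw [h1] at this
        simp [Real.dist_eq] at this
        norm_num at this⟩
    have hGfin : G.Finite := by
      refine Set.Finite.subset (Set.finite_Iio N₀) (fun n hn => ?_)
      have h1 : x n k = 1 := hGF hn
      by_contra hcon
      exact hN₀ n (le_of_not_gt (fun h => hcon h)) h1
    set G' : Finset ℕ := hGfin.toFinset with hG'
    have hG'mem : ∀ n, n ∈ G' ↔ n ∈ G := fun n => Set.Finite.mem_toFinset hGfin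
    -- decreasing sequence of closed nonempty sets
    set D : ℕ → Set K := fun N =>
      {k' | (∀ n ∈ G', x n k' = 1) ∧ ∀ n < N, n ∉ G' → x n k' = 0} with hD
    have hDanti : ∀ N, D (N + 1) ⊆ D N := by
      intro N k' hk'
      exact ⟨hk'.1, fun n hn hn' => hk'.2 n (Nat.lt_succ_of_lt hn) hn'⟩
    have hDclosed : ∀ N, IsClosed (D N) := by
      intro N
      have heq : D N = (⋂ n ∈ G', (fun k' => x n k') ⁻¹' {1}) ∩
          (⋂ n ∈ (Finset.range N).filter (· ∉ G'), (fun k' => x n k') ⁻¹' {0}) := by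
        ext k'
        simp only [hD, Set.mem_setOf_eq, Set.mem_inter_iff, Set.mem_iInter,
          Set.mem_preimage, Set.mem_singleton_iff, Finset.mem_filter, Finset.mem_range]
        constructor
        · rintro ⟨h1, h2⟩
          exact ⟨h1, fun n hn => h2 n hn.1 hn.2⟩
        · rintro ⟨h1, h2⟩
          exact ⟨h1, fun n hn hn' => h2 n ⟨hn, hn'⟩⟩
      rw [heq]
      exact IsClosed.inter
        (isClosed_biInter (fun n _ => IsClosed.preimage (x n).continuous isClosed_singleton))
        (isClosed_biInter (fun n _ => IsClosed.preimage (x n).continuous isClosed_singleton))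
    have hDne : ∀ N, (D N).Nonempty := by
      intro N
      by_cases hGe : G'.Nonempty
      · have hdisj : Disjoint G' ((Finset.range N).filter (· ∉ G')) := by
          rw [Finset.disjoint_right]
          intro n hn
          simp only [Finset.mem_filter] at hn
          exact hn.2
        obtain ⟨k', h1, h2⟩ := stmt_9_key x hind' hsup G'
          ((Finset.range N).filter (· ∉ G')) hdisj hGe
          ⟨k, fun n hn => hGF ((hG'mem n).mp hn)⟩
        exact ⟨k', h1, fun n hn hn' => h2 n (by simp [Finset.mem_filter, hn, hn'])⟩
      · -- G' empty
        have hGe' : G' = ∅ := Finset.not_nonempty_iff_eq_empty.mp hGe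
        obtain ⟨k₁, hk₁⟩ : ∃ k₁, x N k₁ = 1 := by
          by_contra hcon
          push_neg at hcon
          exact (hind N).2 (ContinuousMap.ext (fun k'' =>
            ((hind N).1 k'').resolve_right (hcon k'')))
        have hdisj : Disjoint ({N} : Finset ℕ) (Finset.range N) := by
          simp [Finset.disjoint_left]
        obtain ⟨k', h1, h2⟩ := stmt_9_key x hind' hsup {N} (Finset.range N) hdisj
          ⟨N, Finset.mem_singleton_self N⟩ ⟨k₁, fun n hn => by
            rw [Finset.mem_singleton.mp hn]; exact hk₁⟩
        refine ⟨k', ?_, fun n hn _ => h2 n (Finset.mem_range.mpr hn)⟩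
        intro n hn
        rw [hGe'] at hn
        exact absurd hn (Finset.notMem_empty n)
    obtain ⟨kst, hkst⟩ := IsCompact.nonempty_iInter_of_sequence_nonempty_isCompact_isClosed
      D hDanti hDne (IsClosed.isCompact (hDclosed 0)) hDclosed
    simp only [Set.mem_iInter] at hkst
    refine ⟨kst, ?_⟩
    ext n
    simp only [Set.mem_setOf_eq]
    constructor
    · intro hn
      exact (hkst 0).1 n ((hG'mem n).mpr hn)
    · intro hn
      by_contra hcon
      have hn' : n ∉ G' := fun h => hcon ((hG'mem n).mp h)
      have := (hkst (n + 1)).2 n (Nat.lt_succ_self n) hn'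
      rw [hn] at this
      norm_num at this
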